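/- Suppose R = (X, R₀, Y, R₀^∨) is a root datum and R₀' ⊂ R₀ is an irreducible component of R₀. Put X' = X ∩ ℝR₀' and Y' = Y ∩ ℝ(R₀')^∨. Assume either (i) X' = P(R₀') (the weight lattice of R₀'), or (ii) there exists α ∈ R₀' with α^∨ ∈ 2Y. Then R' = (X', R₀', Y', (R₀')^∨) is a root datum which is a direct summand of R; in case (ii), R' has type C_n^{(1)}. -/

import Mathlib

noncomputable section

namespace SpecCorr

/-- The saturation of the `ℤ`-span of a set `s` in a lattice `X`:
`{x | n•x ∈ span ℤ s for some n ≠ 0}`.  For `s = R₀'` this is the lattice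
`X' = X ∩ ℝR₀'`. -/
def satSpan (X : Type) [AddCommGroup X] (s : Set X) : Submodule ℤ X where
  carrier := {x | ∃ n : ℤ, n ≠ 0 ∧ n • x ∈ Submodule.span ℤ s}
  zero_mem' := ⟨1, one_ne_zero, by simp⟩
  add_mem' := by
    rintro a b ⟨n, hn, ha⟩ ⟨m, hm, hb⟩
    refine ⟨n * m, mul_ne_zero hn hm, ?_⟩
    have h1 : (n * m) • a = m • (n • a) := by rw [mul_comm, mul_smul]
    have h2 : (n * m) • b = n • (m • b) := by rw [mul_smul]
    rw [smul_add, h1, h2]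
    exact Submodule.add_mem _ (Submodule.smul_mem _ _ ha) (Submodule.smul_mem _ _ hb)
  smul_mem' := by
    rintro c a ⟨n, hn, ha⟩
    exact ⟨n, hn, by rw [smul_comm]; exact Submodule.smul_mem _ c ha⟩

/-- A (reduced, semisimple-flavoured) root datum `R = (X, R₀, Y, R₀^∨)`:
lattices `X`, `Y` in perfect duality via `pair`, a reduced root system `R₀ ⊂ X`
with coroots `coroot α ∈ Y`. -/
structure RootDatum where
  X : Type
  Y : Type
  [deceqX : DecidableEq X]
  [grpX : AddCommGroup X]
  [freeX : Module.Free ℤ X]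
  [finX : Module.Finite ℤ X]
  [grpY : AddCommGroup Y]
  [freeY : Module.Free ℤ Y]
  [finY : Module.Finite ℤ Y]
  /-- the perfect pairing `X × Y → ℤ` -/
  pair : X →+ Y →+ ℤ
  pair_perfX : ∀ f : Y →+ ℤ, ∃! x : X, ∀ y : Y, pair x y = f y
  pair_perfY : ∀ f : X →+ ℤ, ∃! y : Y, ∀ x : X, pair x y = f x
  /-- the root system `R₀ ⊂ X` -/
  R0 : Finset X
  /-- the coroot `α^∨ ∈ Y` of a root `α ∈ R₀` -/
  coroot : X → Y
  zero_not_mem : (0 : X) ∉ R0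
  pair_self : ∀ α ∈ R0, pair α (coroot α) = 2
  neg_mem : ∀ α ∈ R0, -α ∈ R0
  reduced : ∀ α ∈ R0, ∀ c : ℤ, c • α ∈ R0 → c = 1 ∨ c = -1
  refl_stable : ∀ α ∈ R0, ∀ β ∈ R0, β - pair β (coroot α) • α ∈ R0
  corefl_stable : ∀ α ∈ R0, ∀ β ∈ R0,
    ∃ γ ∈ R0, coroot γ = coroot β - pair α (coroot β) • coroot α

attribute [instance] RootDatum.deceqX RootDatum.grpX RootDatum.freeX RootDatum.finX
  RootDatum.grpY RootDatum.freeY RootDatum.finY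

namespace RootDatum

variable (R : RootDatum)

/-- `R₀' ⊆ R₀` is an irreducible component of `R₀`: it is orthogonal to its complement
and admits no further nontrivial orthogonal decomposition. -/
def IsIrreducibleComponent (R' : Finset R.X) : Prop :=
  R'.Nonempty ∧ R' ⊆ R.R0 ∧
  (∀ α ∈ R', ∀ β ∈ R.R0, β ∉ R' → R.pair α (R.coroot β) = 0 ∧ R.pair β (R.coroot α) = 0) ∧
  (∀ A B : Finset R.X, A ∪ B = R' → A ∩ B = ∅ → A.Nonempty → B.Nonempty →
    ∃ α ∈ A, ∃ β ∈ B, R.pair α (R.coroot β) ≠ 0)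

/-- The lattice `X' = X ∩ ℝR₀'`. -/
def Xsub (R' : Finset R.X) : Submodule ℤ R.X := satSpan R.X (R' : Set R.X)

/-- The lattice `Y' = Y ∩ ℝ(R₀')^∨`. -/
def Ysub (R' : Finset R.X) : Submodule ℤ R.Y := satSpan R.Y (R.coroot '' (R' : Set R.X))

/-- `X' = P(R₀')`, i.e. `X'` realizes every `ℤ`-linear functional on the coroot
lattice `Q((R₀')^∨)` of the component (so `X'` is the full weight lattice of `R₀'`). -/
def XsubIsWeightLattice (R' : Finset R.X) : Prop :=
  ∀ f : ↥(Submodule.span ℤ (R.coroot '' (R' : Set R.X))) →ₗ[ℤ] ℤ,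
    ∃ x ∈ R.Xsub R', ∀ y : ↥(Submodule.span ℤ (R.coroot '' (R' : Set R.X))),
      R.pair x y = f y

/-- The root datum `R' = (X', R₀', Y', (R₀')^∨)` is a *direct summand* of `R`. -/
def IsDirectSummand (R' : Finset R.X) : Prop :=
  ∃ (X2 : Submodule ℤ R.X) (Y2 : Submodule ℤ R.Y),
    IsCompl (R.Xsub R') X2 ∧ IsCompl (R.Ysub R') Y2 ∧
    (∀ α ∈ R.R0, α ∉ R' → α ∈ X2) ∧
    (∀ α ∈ R.R0, α ∉ R' → R.coroot α ∈ Y2) ∧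
    (∀ x ∈ R.Xsub R', ∀ y ∈ Y2, R.pair x y = 0) ∧
    (∀ x ∈ X2, ∀ y ∈ R.Ysub R', R.pair x y = 0)

/-- `R'` has type `C_n^{(1)}`: `R₀'` is of type `B_n` (it contains a root whose coroot
is divisible by `2` in `Y'`) and `X'` equals the root lattice `Q(R₀')`. -/
def IsTypeC1 (R' : Finset R.X) : Prop :=
  R.Xsub R' = Submodule.span ℤ (R' : Set R.X) ∧
  ∃ α ∈ R', ∃ y ∈ R.Ysub R', R.coroot α = y + y

end RootDatum

section NondegEngine

variable {X : Type} [AddCommGroup X] [Module.Free ℤ X] [Module.Finite ℤ X]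

/-- Nondegeneracy engine: if `S` is a finite "root-like" set with integral functionals
`f c` satisfying `f c c = 2` and reflection-stability, then any element of the span of `S`
killed by all the `f c` is zero. -/
theorem span_pairing_nondeg (S : Finset X) (f : X → X →+ ℤ)
    (h2 : ∀ c ∈ S, f c c = 2)
    (hrefl : ∀ c ∈ S, ∀ x ∈ S, x - f c x • c ∈ S)
    {z : X} (hz : z ∈ Submodule.span ℤ (S : Set X))
    (hv : ∀ c ∈ S, f c z = 0) : z = 0 := by
  classical
  set M : Submodule ℤ X := Submodule.span ℤ (S : Set X) with hMdef
  let SM : Set ↥M := {x : ↥M | (x : X) ∈ (S : Set X)}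
  have hspan : Submodule.span ℤ SM = ⊤ := Submodule.span_setOf_mem_eq_top
  have hSMfin : Finite ↥SM :=
    (S.finite_toSet.preimage (Subtype.coe_injective.injOn)).to_subtype
  -- reflections as linear maps on M
  let τ : ↥M → ↥M →ₗ[ℤ] ↥M := fun c =>
    (AddMonoidHom.mk' (fun x : ↥M => x - f (c : X) (x : X) • c) (by
      intro a b
      have h := map_add (f (c:X)) (a:X) (b:X)
      apply Subtype.ext
      push_cast
      rw [h, add_smul]
      abel)).toIntLinearMap
  have τ_apply : ∀ c x, τ c x = x - f (c : X) (x : X) • c := fun _ _ => rfl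
  have hτmem : ∀ c ∈ SM, ∀ x ∈ SM, τ c x ∈ SM := by
    intro c hc x hx
    have h := hrefl (c : X) hc (x : X) hx
    show ((τ c x : ↥M) : X) ∈ (S : Set X)
    rw [τ_apply]
    push_cast
    exact h
  have hτf : ∀ c ∈ SM, ∀ x : ↥M, f (c:X) ((τ c x : ↥M) : X) = - f (c:X) (x:X) := by
    intro c hc x
    rw [τ_apply]
    push_cast
    rw [map_sub, map_zsmul, h2 (c:X) hc]
    simp only [smul_eq_mul]
    ring
  have hτinv : ∀ c ∈ SM, Function.Involutive (τ c) := by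
    intro c hc x
    have h1 := hτf c hc x
    rw [τ_apply c (τ c x), h1, τ_apply c x, neg_smul, sub_neg_eq_add, sub_add_cancel]
  -- the involutive linear automorphisms
  let σ : ∀ c : ↥M, c ∈ SM → (↥M ≃ₗ[ℤ] ↥M) := fun c hc =>
    LinearEquiv.ofInvolutive (τ c) (hτinv c hc)
  have σ_apply : ∀ c hc x, σ c hc x = τ c x := fun _ _ _ => rfl
  -- the finite group of symmetries
  let G : Set (↥M ≃ₗ[ℤ] ↥M) := {g | ∀ x ∈ SM, g x ∈ SM}
  have hGsub : Finite ↥G := by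
    have hinj : Function.Injective (fun (g : ↥G) => (fun x : ↥SM => (⟨g.1 x.1, g.2 x.1 x.2⟩ : ↥SM))) := by
      intro g g' h
      apply Subtype.ext
      apply LinearEquiv.toLinearMap_injective
      apply LinearMap.ext_on hspan
      intro x hx
      have := congrFun h ⟨x, hx⟩
      exact congrArg Subtype.val this
    exact Finite.of_injective _ hinj
  have hGfin : G.Finite := @Set.toFinite _ G hGsub
  let GF : Finset (↥M ≃ₗ[ℤ] ↥M) := hGfin.toFinset
  have hGF : ∀ g, g ∈ GF ↔ ∀ x ∈ SM, g x ∈ SM := fun g => hGfin.mem_toFinset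
  have h1G : (1 : ↥M ≃ₗ[ℤ] ↥M) ∈ GF := (hGF 1).mpr (fun x hx => hx)
  -- auxiliary positive definite form
  let b := Module.Free.chooseBasis ℤ ↥M
  let d : ↥M → ↥M → ℤ := fun x y => ∑ i, b.repr x i * b.repr y i
  have d_add_left : ∀ x y w, d (x + y) w = d x w + d y w := by
    intro x y w
    simp [d, Finsupp.add_apply, add_mul, Finset.sum_add_distrib]
  have d_smul_left : ∀ (k : ℤ) (x w), d (k • x) w = k * d x w := by
    intro k x w
    simp [d, Finsupp.smul_apply, smul_eq_mul, Finset.mul_sum, mul_assoc]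
  have d_comm : ∀ x y, d x y = d y x := by
    intro x y; simp [d, mul_comm]
  have d_sub_left : ∀ x y w, d (x - y) w = d x w - d y w := by
    intro x y w
    simp [d, Finsupp.sub_apply, sub_mul, Finset.sum_sub_distrib]
  have d_self_nonneg : ∀ x, 0 ≤ d x x := fun x =>
    Finset.sum_nonneg fun i _ => mul_self_nonneg _
  have d_self_eq_zero : ∀ x, d x x = 0 → x = 0 := by
    intro x hx
    have h := (Finset.sum_eq_zero_iff_of_nonneg
      (fun i _ => mul_self_nonneg (b.repr x i))).mp hx
    have hr : b.repr x = 0 := by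
      ext i
      exact mul_self_eq_zero.mp (h i (Finset.mem_univ i))
    exact b.repr.map_eq_zero_iff.mp hr
  -- the averaged form
  let B : ↥M → ↥M → ℤ := fun x y => ∑ g ∈ GF, d (g x) (g y)
  have B_add_left : ∀ x y w, B (x + y) w = B x w + B y w := by
    intro x y w
    simp only [B, map_add, d_add_left, Finset.sum_add_distrib]
  have B_smul_left : ∀ (k : ℤ) (x w), B (k • x) w = k * B x w := by
    intro k x w
    simp only [B, map_smul, d_smul_left, Finset.mul_sum]
  have B_sub_left : ∀ x y w, B (x - y) w = B x w - B y w := by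
    intro x y w
    simp only [B, map_sub, d_sub_left, Finset.sum_sub_distrib]
  have B_comm : ∀ x y, B x y = B y x := by
    intro x y; simp only [B]; exact Finset.sum_congr rfl fun g _ => d_comm _ _
  have B_zero_right : ∀ x, B x 0 = 0 := by
    intro x
    simp only [B]
    refine Finset.sum_eq_zero fun g _ => ?_
    rw [map_zero]
    simp [d]
  have B_neg_right : ∀ x y, B x (-y) = - B x y := by
    intro x y
    have h1 : -y = y - (y + y) := by abel
    rw [h1, B_comm, B_sub_left, B_add_left, B_comm y x]
    ring
  -- invariance under reflections from SM
  have B_inv : ∀ (c : ↥M) (hc : c ∈ SM) (x y : ↥M), B (σ c hc x) (σ c hc y) = B x y := by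
    intro c hc x y
    have hσG : (σ c hc) ∈ GF := (hGF _).mpr (fun w hw => hτmem c hc w hw)
    have hσσ : σ c hc * σ c hc = 1 := by
      apply LinearEquiv.toLinearMap_injective
      apply LinearMap.ext
      intro w
      exact hτinv c hc w
    refine Finset.sum_nbij' (fun g => g * σ c hc) (fun g => g * σ c hc) ?_ ?_ ?_ ?_ ?_
    · intro a ha
      rw [hGF] at ha ⊢
      intro w hw
      exact ha _ (hτmem c hc w hw)
    · intro a ha
      rw [hGF] at ha ⊢
      intro w hw
      exact ha _ (hτmem c hc w hw)
    · intro a _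
      show a * σ c hc * σ c hc = a
      rw [mul_assoc, hσσ, mul_one]
    · intro a _
      show a * σ c hc * σ c hc = a
      rw [mul_assoc, hσσ, mul_one]
    · intro a _
      rfl
  -- key reflection identity
  have B_ident : ∀ (c : ↥M) (hc : c ∈ SM) (x : ↥M),
      f (c:X) (x:X) * B c c = 2 * B x c := by
    intro c hc x
    have hσc : σ c hc c = -c := by
      rw [σ_apply c hc c, τ_apply c c, h2 (c:X) hc, two_smul]
      abel
    have h3 := B_inv c hc x c
    rw [hσc, σ_apply c hc x, τ_apply c x, B_neg_right, B_sub_left, B_smul_left] at h3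
    linarith
  have Bcc_pos : ∀ c : ↥M, c ∈ SM → 0 < B c c := by
    intro c hc
    have hc0 : c ≠ 0 := by
      intro h
      have h2' := h2 (c:X) hc
      rw [h] at h2'
      simp at h2'
    have hd : 0 < d c c :=
      (d_self_nonneg c).lt_of_ne (fun h => hc0 (d_self_eq_zero c h.symm))
    have hle : d c c ≤ B c c := by
      have := Finset.single_le_sum (f := fun g : (↥M ≃ₗ[ℤ] ↥M) => d (g c) (g c))
        (fun g _ => d_self_nonneg (g c)) h1G
      simpa using this
    omega
  -- conclude
  set zM : ↥M := ⟨z, hz⟩ with hzM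
  have hBz : ∀ c : ↥M, c ∈ SM → B zM c = 0 := by
    intro c hc
    have hident := B_ident c hc zM
    have hfz : f (c:X) ((zM : ↥M) : X) = 0 := hv (c:X) hc
    rw [hfz] at hident
    have h2ne : (2:ℤ) ≠ 0 := by norm_num
    have := hident.symm
    rw [zero_mul] at this
    exact (mul_eq_zero.mp this).resolve_left h2ne
  have hBzz : B zM zM = 0 := by
    have hmem : zM ∈ Submodule.span ℤ SM := hspan ▸ Submodule.mem_top
    refine Submodule.span_induction (p := fun y _ => B zM y = 0)
      (fun y hy => ?_) ?_ (fun u v _ _ hu hv' => ?_) (fun k u _ hu => ?_) hmem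
    · exact hBz y hy
    · exact B_zero_right zM
    · show B zM (u + v) = 0
      rw [B_comm, B_add_left, B_comm u zM, B_comm v zM,
        show B zM u = 0 from hu, show B zM v = 0 from hv', add_zero]
    · show B zM (k • u) = 0
      rw [B_comm, B_smul_left, B_comm u zM, show B zM u = 0 from hu, mul_zero]
  have hdzz : d zM zM = 0 := by
    have hterms := (Finset.sum_eq_zero_iff_of_nonneg
      (fun (g : ↥M ≃ₗ[ℤ] ↥M) (_ : g ∈ GF) => d_self_nonneg (g zM))).mp hBzz
    have := hterms 1 h1G
    simpa using this
  have : zM = 0 := d_self_eq_zero zM hdzz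
  have := congrArg (Subtype.val) this
  simpa [hzM] using this

end NondegEngine

/-- Choosing representatives of `±`-pairs in a finite set. -/
lemma exists_signreps {A : Type} [DecidableEq A] [AddCommGroup A] :
    ∀ T : Finset A, (∀ β ∈ T, β ≠ -β) →
      ∃ Tb ⊆ T, (∀ β ∈ T, β ∈ Tb ∨ -β ∈ Tb) ∧ ∀ β ∈ Tb, -β ∉ Tb := by
  intro T
  induction T using Finset.strongInduction with
  | _ T ih =>
    intro hT
    rcases T.eq_empty_or_nonempty with rfl | ⟨β, hβ⟩
    · exact ⟨∅, Finset.Subset.refl _, by simp, by simp⟩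
    · have hsub : ((T.erase β).erase (-β)) ⊂ T :=
        lt_of_le_of_lt (Finset.erase_subset _ _) (Finset.erase_ssubset hβ)
      obtain ⟨Tb₂, hTb₂, hcov, hopp⟩ := ih _ hsub
        (fun γ hγ => hT γ (Finset.mem_of_mem_erase (Finset.mem_of_mem_erase hγ)))
      refine ⟨insert β Tb₂, ?_, ?_, ?_⟩
      · intro γ hγ
        rcases Finset.mem_insert.mp hγ with rfl | hγ'
        · exact hβ
        · exact Finset.mem_of_mem_erase (Finset.mem_of_mem_erase (hTb₂ hγ'))
      · intro γ hγ
        by_cases h1 : γ = β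
        · exact Or.inl (h1 ▸ Finset.mem_insert_self _ _)
        by_cases h2 : γ = -β
        · refine Or.inr ?_
          rw [h2, neg_neg]
          exact Finset.mem_insert_self _ _
        · have hγ2 : γ ∈ (T.erase β).erase (-β) :=
            Finset.mem_erase.mpr ⟨h2, Finset.mem_erase.mpr ⟨h1, hγ⟩⟩
          rcases hcov γ hγ2 with h | h
          · exact Or.inl (Finset.mem_insert_of_mem h)
          · exact Or.inr (Finset.mem_insert_of_mem h)
      · intro γ hγ hγn
        rcases Finset.mem_insert.mp hγ with rfl | hγ'
        · rcases Finset.mem_insert.mp hγn with h | h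
          · exact hT γ hβ h.symm
          · exact (Finset.mem_erase.mp (hTb₂ h)).1 rfl
        · rcases Finset.mem_insert.mp hγn with h | h
          · have : γ = -β := by rw [← h, neg_neg]
            exact (Finset.mem_erase.mp (hTb₂ hγ')).1 this
          · exact hopp γ hγ' h

/-- Rank/duality lemma: if a bilinear pairing between two finite free `ℤ`-modules is
nondegenerate on both sides, then every functional on `U` has a nonzero multiple realized
by an element of `V`. -/
lemma lemR {U V : Type} [AddCommGroup U] [Module ℤ U] [Module.Free ℤ U] [Module.Finite ℤ U]
    [AddCommGroup V] [Module ℤ V] [Module.Free ℤ V] [Module.Finite ℤ V]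
    (p : U →ₗ[ℤ] V →ₗ[ℤ] ℤ)
    (hU : ∀ u : U, (∀ v, p u v = 0) → u = 0)
    (hV : ∀ v : V, (∀ u, p u v = 0) → v = 0)
    (f : U →ₗ[ℤ] ℤ) :
    ∃ n : ℤ, n ≠ 0 ∧ ∃ v : V, ∀ u, n * f u = p u v := by
  classical
  let bU := Module.Free.chooseBasis ℤ U
  let bV := Module.Free.chooseBasis ℤ V
  haveI : Module.Finite ℤ (U →ₗ[ℤ] ℤ) := Module.Finite.of_basis bU.dualBasis
  haveI : Module.Free ℤ (U →ₗ[ℤ] ℤ) := Module.Free.of_basis bU.dualBasis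
  haveI : Module.Finite ℤ (V →ₗ[ℤ] ℤ) := Module.Finite.of_basis bV.dualBasis
  have hUdual : Module.finrank ℤ (U →ₗ[ℤ] ℤ) = Module.finrank ℤ U := by
    rw [Module.finrank_eq_card_basis (ι := Module.Free.ChooseBasisIndex ℤ U) bU.dualBasis,
      Module.finrank_eq_card_basis bU]
  have hVdual : Module.finrank ℤ (V →ₗ[ℤ] ℤ) = Module.finrank ℤ V := by
    rw [Module.finrank_eq_card_basis (ι := Module.Free.ChooseBasisIndex ℤ V) bV.dualBasis,
      Module.finrank_eq_card_basis bV]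
  have hΦinj : Function.Injective (p.flip) := by
    rw [injective_iff_map_eq_zero]
    intro v hv
    exact hV v (fun u => by
      have := LinearMap.congr_fun hv u
      simpa using this)
  have hpinj : Function.Injective p := by
    rw [injective_iff_map_eq_zero]
    intro u hu
    exact hU u (fun v => by
      have := LinearMap.congr_fun hu v
      simpa using this)
  have hVle : Module.finrank ℤ V ≤ Module.finrank ℤ U := by
    have h := LinearMap.finrank_le_finrank_of_injective hΦinj
    rw [hUdual] at h
    exact h
  have hUle : Module.finrank ℤ U ≤ Module.finrank ℤ V := by
    have h := LinearMap.finrank_le_finrank_of_injective hpinj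
    rw [hVdual] at h
    exact h
  set W := LinearMap.range p.flip with hW
  have hWrank : Module.finrank ℤ ↥W = Module.finrank ℤ U := by
    have h1 := (LinearEquiv.finrank_eq (LinearEquiv.ofInjective p.flip hΦinj)).symm
    rw [← hW] at h1
    omega
  by_contra hcon
  push_neg at hcon
  have hnf : ∀ n : ℤ, n ≠ 0 → n • f ∉ W := by
    intro n hn hmem
    obtain ⟨v, hv⟩ := hmem
    obtain ⟨u, hu⟩ := hcon n hn v
    apply hu
    have h1 := LinearMap.congr_fun hv u
    simpa [mul_comm] using h1.symm
  let bW := Module.Free.chooseBasis ℤ ↥W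
  have hcard : Fintype.card (Module.Free.ChooseBasisIndex ℤ ↥W) = Module.finrank ℤ U := by
    rw [← Module.finrank_eq_card_chooseBasisIndex]
    exact hWrank
  set fam : Option (Module.Free.ChooseBasisIndex ℤ ↥W) → Module.Dual ℤ U :=
    fun o => Option.elim o f (fun i => ((bW i : ↥W) : Module.Dual ℤ U)) with hfam
  have hind : LinearIndependent ℤ fam := by
    rw [Fintype.linearIndependent_iff]
    intro g hg
    rw [Fintype.sum_option] at hg
    by_cases h0 : g none = 0
    · have hg' : ∑ i, g (some i) • (fam (some i)) = 0 := by
        rw [h0, zero_smul, zero_add] at hg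
        exact hg
      have hsum : ((∑ i, g (some i) • bW i : ↥W) : Module.Dual ℤ U) = 0 := by
        push_cast
        exact hg'
      have hz : (∑ i, g (some i) • bW i : ↥W) = 0 := Subtype.ext hsum
      have hcoords := (Fintype.linearIndependent_iff.mp bW.linearIndependent) _ hz
      intro o
      cases o with
      | none => exact h0
      | some i => exact hcoords i
    · exfalso
      apply hnf (g none) h0
      have heq : g none • f = -∑ i, g (some i) • (fam (some i)) :=
        eq_neg_of_add_eq_zero_left hg
      rw [heq]
      apply Submodule.neg_mem
      apply Submodule.sum_mem
      intro i _
      exact Submodule.smul_mem _ _ (bW i).2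
  have hle := hind.fintype_card_le_finrank
  rw [Fintype.card_option, hcard] at hle
  have : Module.finrank ℤ (Module.Dual ℤ U) = Module.finrank ℤ U := hUdual
  omega


namespace RootDatum

variable (R : RootDatum)

lemma mem_satSpan' {Z : Type} [AddCommGroup Z] {s : Set Z} {x : Z} :
    x ∈ satSpan Z s ↔ ∃ n : ℤ, n ≠ 0 ∧ n • x ∈ Submodule.span ℤ s := Iff.rfl

lemma pair_smul_left (n : ℤ) (x : R.X) (y : R.Y) :
    R.pair (n • x) y = n * R.pair x y := by
  have := map_zsmul (R.pair.flip y) n x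
  simpa [smul_eq_mul] using this

lemma pair_smul_right (x : R.X) (n : ℤ) (y : R.Y) :
    R.pair x (n • y) = n * R.pair x y := by
  have := map_zsmul (R.pair x) n y
  simpa [smul_eq_mul] using this

lemma pair_sub_left (x x' : R.X) (y : R.Y) :
    R.pair (x - x') y = R.pair x y - R.pair x' y := by
  have := map_sub (R.pair.flip y) x x'
  simpa using this

lemma pair_add_left (x x' : R.X) (y : R.Y) :
    R.pair (x + x') y = R.pair x y + R.pair x' y := by
  have := map_add (R.pair.flip y) x x'
  simpa using this

lemma pair_sub_right (x : R.X) (y y' : R.Y) :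
    R.pair x (y - y') = R.pair x y - R.pair x y' := map_sub (R.pair x) y y'

lemma pair_add_right (x : R.X) (y y' : R.Y) :
    R.pair x (y + y') = R.pair x y + R.pair x y' := map_add (R.pair x) y y'

lemma pair_neg_right (x : R.X) (y : R.Y) :
    R.pair x (-y) = - R.pair x y := map_neg (R.pair x) y

lemma pair_sum_left {ι : Type} (s : Finset ι) (g : ι → R.X) (y : R.Y) :
    R.pair (∑ i ∈ s, g i) y = ∑ i ∈ s, R.pair (g i) y := by
  have := map_sum (R.pair.flip y) g s
  simpa using this

lemma pair_left_eq_zero {x : R.X} (h : ∀ y : R.Y, R.pair x y = 0) : x = 0 := by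
  obtain ⟨x0, _, huniq⟩ := R.pair_perfX 0
  have h1 : x = x0 := huniq x (fun y => by rw [h y]; simp)
  have h2 : (0 : R.X) = x0 := huniq 0 (fun y => by simp)
  rw [h1, ← h2]

lemma pair_right_eq_zero {y : R.Y} (h : ∀ x : R.X, R.pair x y = 0) : y = 0 := by
  obtain ⟨y0, _, huniq⟩ := R.pair_perfY 0
  have h1 : y = y0 := huniq y (fun x => by rw [h x]; simp)
  have h2 : (0 : R.Y) = y0 := huniq 0 (fun x => by simp)
  rw [h1, ← h2]

lemma pair_span_right {s : Set R.Y} {x : R.X} (h : ∀ y ∈ s, R.pair x y = 0) :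
    ∀ y ∈ Submodule.span ℤ s, R.pair x y = 0 := by
  intro y hy
  refine Submodule.span_induction (p := fun y _ => R.pair x y = 0)
    (fun y hy => h y hy) (by simp) ?_ ?_ hy
  · intro u v _ _ hu hv
    show R.pair x (u + v) = 0
    rw [R.pair_add_right, hu, hv, add_zero]
  · intro k u _ hu
    show R.pair x (k • u) = 0
    rw [R.pair_smul_right, hu, mul_zero]

lemma pair_span_left {s : Set R.X} {y : R.Y} (h : ∀ x ∈ s, R.pair x y = 0) :
    ∀ x ∈ Submodule.span ℤ s, R.pair x y = 0 := by
  intro x hx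
  refine Submodule.span_induction (p := fun x _ => R.pair x y = 0)
    (fun x hx => h x hx) (by simp) ?_ ?_ hx
  · intro u v _ _ hu hv
    show R.pair (u + v) y = 0
    rw [R.pair_add_left, hu, hv, add_zero]
  · intro k u _ hu
    show R.pair (k • u) y = 0
    rw [R.pair_smul_left, hu, mul_zero]

/-- The reflection `s_α` as an endomorphism of `X`. -/
def sre (α : R.X) : Module.End ℤ R.X :=
  (AddMonoidHom.mk' (fun x => x - R.pair x (R.coroot α) • α) (by
    intro a b
    show (a + b) - R.pair (a + b) (R.coroot α) • α
        = (a - R.pair a (R.coroot α) • α) + (b - R.pair b (R.coroot α) • α)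
    rw [R.pair_add_left, add_smul]
    abel)).toIntLinearMap

lemma sre_apply (α x : R.X) : R.sre α x = x - R.pair x (R.coroot α) • α := rfl

lemma sre_mem {α : R.X} (hα : α ∈ R.R0) (x : R.X) (hx : x ∈ R.R0) :
    R.sre α x ∈ R.R0 := R.refl_stable α hα x hx

/-- Nondegeneracy of the pairing on the full coroot lattice. -/
lemma coroot_span_nondeg_full {z : R.Y}
    (hz : z ∈ Submodule.span ℤ (R.coroot '' (R.R0 : Set R.X)))
    (h : ∀ γ ∈ R.R0, R.pair γ z = 0) : z = 0 := by
  classical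
  set S : Finset R.Y := R.R0.image R.coroot with hS
  have hSc : (S : Set R.Y) = R.coroot '' (R.R0 : Set R.X) := by
    rw [hS]; exact Finset.coe_image
  let pick : R.Y → R.X := fun c =>
    if h : ∃ α ∈ R.R0, R.coroot α = c then h.choose else 0
  have hpick : ∀ c ∈ S, pick c ∈ R.R0 ∧ R.coroot (pick c) = c := by
    intro c hc
    rw [hS, Finset.mem_image] at hc
    obtain ⟨α, hα, hαc⟩ := hc
    have hex : ∃ α ∈ R.R0, R.coroot α = c := ⟨α, hα, hαc⟩
    simp only [pick, dif_pos hex]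
    exact ⟨hex.choose_spec.1, hex.choose_spec.2⟩
  apply span_pairing_nondeg S (fun c => R.pair (pick c)) ?_ ?_ (hSc ▸ hz) ?_
  · intro c hc
    obtain ⟨h1, h2⟩ := hpick c hc
    show R.pair (pick c) c = 2
    have := R.pair_self (pick c) h1
    rw [h2] at this
    exact this
  · intro c hc x hx
    obtain ⟨hc1, hc2⟩ := hpick c hc
    obtain ⟨hx1, hx2⟩ := hpick x hx
    show x - R.pair (pick c) x • c ∈ S
    obtain ⟨γ, hγ, hγc⟩ := R.corefl_stable (pick c) hc1 (pick x) hx1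
    rw [hS, Finset.mem_image]
    refine ⟨γ, hγ, ?_⟩
    rw [hγc, hx2, hc2]
  · intro c hc
    show R.pair (pick c) z = 0
    exact h (pick c) (hpick c hc).1

/-- Uniqueness: the coroot of a reflected root is the reflected coroot. -/
lemma coroot_sre {α β : R.X} (hα : α ∈ R.R0) (hβ : β ∈ R.R0) :
    R.coroot (β - R.pair β (R.coroot α) • α)
      = R.coroot β - R.pair α (R.coroot β) • R.coroot α := by
  classical
  set a := R.pair β (R.coroot α) with hadef
  set bb := R.pair α (R.coroot β) with hbbdef
  set v := β - a • α with hvdef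
  have hvmem : v ∈ R.R0 := R.refl_stable α hα β hβ
  set c := R.coroot v with hcdef
  set c' := R.coroot β - bb • R.coroot α with hc'def
  obtain ⟨δ, hδ, hδc⟩ := R.corefl_stable α hα β hβ
  rw [← hbbdef, ← hc'def] at hδc
  clear_value a bb v c c'
  have hvc : R.pair v c = 2 := by rw [hcdef]; exact R.pair_self v hvmem
  have hvc' : R.pair v c' = 2 := by
    rw [hvdef, hc'def]
    simp only [R.pair_sub_left, R.pair_sub_right, R.pair_smul_left, R.pair_smul_right,
      R.pair_self β hβ, R.pair_self α hα, ← hadef, ← hbbdef]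
    ring
  have key : ∀ x : R.X, R.sre α (R.sre β (R.sre α x)) = x - R.pair x c' • v := by
    intro x
    simp only [sre_apply, R.pair_sub_left, R.pair_smul_left,
      R.pair_self α hα, R.pair_self β hβ]
    rw [hc'def, hvdef, R.pair_sub_right, R.pair_smul_right, ← hadef, ← hbbdef]
    module
  have hs2 : ∀ x ∈ R.R0, x - R.pair x c' • v ∈ R.R0 := by
    intro x hx
    rw [← key]
    exact R.sre_mem hα _ (R.sre_mem hβ _ (R.sre_mem hα _ hx))
  have hs1 : ∀ x ∈ R.R0, x - R.pair x c • v ∈ R.R0 := by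
    intro x hx
    rw [hcdef]
    exact R.refl_stable v hvmem x hx
  have hu : ∀ x ∈ R.R0, x + R.pair x (c' - c) • v ∈ R.R0 := by
    intro x hx
    have h2 := hs1 _ (hs2 x hx)
    have heq : (x - R.pair x c' • v) - R.pair (x - R.pair x c' • v) c • v
        = x + R.pair x (c' - c) • v := by
      rw [R.pair_sub_left, R.pair_smul_left, hvc, R.pair_sub_right]
      module
    rw [heq] at h2
    exact h2
  have hv0 : R.pair v (c' - c) = 0 := by
    rw [R.pair_sub_right, hvc, hvc']
    ring
  have hiter : ∀ x ∈ R.R0, ∀ n : ℕ, x + ((n : ℤ) * R.pair x (c' - c)) • v ∈ R.R0 := by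
    intro x hx n
    induction n with
    | zero => simpa using hx
    | succ n ih =>
      have h1 := hu _ ih
      have h2 : R.pair (x + ((n : ℤ) * R.pair x (c' - c)) • v) (c' - c)
          = R.pair x (c' - c) := by
        rw [R.pair_add_left, R.pair_smul_left, hv0, mul_zero, add_zero]
      rw [h2] at h1
      have h3 : x + ((n : ℤ) * R.pair x (c' - c)) • v + R.pair x (c' - c) • v
          = x + (((n + 1 : ℕ) : ℤ) * R.pair x (c' - c)) • v := by
        push_cast
        module
      rw [h3] at h1
      exact h1
  have hvne : v ≠ 0 := by
    intro h
    exact R.zero_not_mem (h ▸ hvmem)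
  have hzero : ∀ x ∈ R.R0, R.pair x (c' - c) = 0 := by
    intro x hx
    by_contra hne
    have hinj : Function.Injective
        (fun n : ℕ => x + ((n : ℤ) * R.pair x (c' - c)) • v) := by
      intro n m hnm
      simp only at hnm
      have h3 : ((n : ℤ) * R.pair x (c' - c)) • v
          = ((m : ℤ) * R.pair x (c' - c)) • v := by
        have := add_left_cancel hnm
        exact this
      have h4 := smul_left_injective ℤ hvne h3
      have h5 : (n : ℤ) = m := mul_right_cancel₀ hne h4
      exact_mod_cast h5
    exact Set.infinite_of_injective_forall_mem hinj
      (fun n => hiter x hx n) R.R0.finite_toSet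
  have hmem : c' - c ∈ Submodule.span ℤ (R.coroot '' (R.R0 : Set R.X)) := by
    apply Submodule.sub_mem
    · rw [← hδc]
      exact Submodule.subset_span ⟨δ, hδ, rfl⟩
    · rw [hcdef]
      exact Submodule.subset_span ⟨v, hvmem, rfl⟩
  have h0 := R.coroot_span_nondeg_full hmem hzero
  exact (sub_eq_zero.mp h0).symm

lemma coroot_neg {α : R.X} (hα : α ∈ R.R0) : R.coroot (-α) = - R.coroot α := by
  have h := R.coroot_sre hα hα
  rw [R.pair_self α hα] at h
  have h1 : α - (2:ℤ) • α = -α := by module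
  have h2 : R.coroot α - (2:ℤ) • R.coroot α = - R.coroot α := by module
  rw [h1, h2] at h
  exact h

end RootDatum


namespace RootDatum

variable (R : RootDatum)

lemma coroot_ne_zero {α : R.X} (hα : α ∈ R.R0) : α ≠ 0 :=
  fun h => R.zero_not_mem (h ▸ hα)

/-- Reflections of the component stay in the component. -/
lemma refl_mem_comp {R' : Finset R.X} (hcomp : R.IsIrreducibleComponent R')
    {α β : R.X} (hα : α ∈ R') (hβ : β ∈ R') :
    β - R.pair β (R.coroot α) • α ∈ R' := by
  obtain ⟨hne, hsub, horth, hconn⟩ := hcomp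
  by_contra hvn
  have hv0 : β - R.pair β (R.coroot α) • α ∈ R.R0 := R.refl_stable α (hsub hα) β (hsub hβ)
  have hkill : ∀ x ∈ (R' : Set R.X),
      R.pair x (R.coroot (β - R.pair β (R.coroot α) • α)) = 0 :=
    fun x hx => (horth x hx _ hv0 hvn).1
  have hvspan : β - R.pair β (R.coroot α) • α ∈ Submodule.span ℤ (R' : Set R.X) :=
    Submodule.sub_mem _ (Submodule.subset_span hβ)
      (Submodule.smul_mem _ _ (Submodule.subset_span hα))
  have h0 := R.pair_span_left hkill _ hvspan
  rw [R.pair_self _ hv0] at h0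
  norm_num at h0

lemma neg_mem_comp {R' : Finset R.X} (hcomp : R.IsIrreducibleComponent R')
    {α : R.X} (hα : α ∈ R') : -α ∈ R' := by
  have h := R.refl_mem_comp hcomp hα hα
  rw [R.pair_self α (hcomp.2.1 hα)] at h
  have h2 : α - (2:ℤ) • α = -α := by module
  rw [h2] at h
  exact h

/-- Nondegeneracy of the pairing on the root lattice of the component. -/
lemma nondeg_comp_left {R' : Finset R.X} (hcomp : R.IsIrreducibleComponent R')
    {z : R.X} (hz : z ∈ Submodule.span ℤ (R' : Set R.X))
    (h : ∀ α ∈ R', R.pair z (R.coroot α) = 0) : z = 0 := by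
  apply span_pairing_nondeg R' (fun c => R.pair.flip (R.coroot c)) ?_ ?_ hz ?_
  · intro c hc
    show R.pair c (R.coroot c) = 2
    exact R.pair_self c (hcomp.2.1 hc)
  · intro c hc x hx
    show x - R.pair x (R.coroot c) • c ∈ R'
    exact R.refl_mem_comp hcomp hc hx
  · intro c hc
    show R.pair z (R.coroot c) = 0
    exact h c hc

/-- Nondegeneracy of the pairing on the coroot lattice of the component. -/
lemma nondeg_comp_right {R' : Finset R.X} (hcomp : R.IsIrreducibleComponent R')
    {z : R.Y} (hz : z ∈ Submodule.span ℤ (R.coroot '' (R' : Set R.X)))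
    (h : ∀ α ∈ R', R.pair α z = 0) : z = 0 := by
  classical
  set S : Finset R.Y := R'.image R.coroot with hS
  have hSc : (S : Set R.Y) = R.coroot '' (R' : Set R.X) := by
    rw [hS]; exact Finset.coe_image
  let pick : R.Y → R.X := fun c =>
    if h : ∃ α ∈ R', R.coroot α = c then h.choose else 0
  have hpick : ∀ c ∈ S, pick c ∈ R' ∧ R.coroot (pick c) = c := by
    intro c hc
    rw [hS, Finset.mem_image] at hc
    obtain ⟨α, hα, hαc⟩ := hc
    have hex : ∃ α ∈ R', R.coroot α = c := ⟨α, hα, hαc⟩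
    simp only [pick, dif_pos hex]
    exact ⟨hex.choose_spec.1, hex.choose_spec.2⟩
  apply span_pairing_nondeg S (fun c => R.pair (pick c)) ?_ ?_ (hSc ▸ hz) ?_
  · intro c hc
    obtain ⟨h1, h2⟩ := hpick c hc
    show R.pair (pick c) c = 2
    have := R.pair_self (pick c) (hcomp.2.1 h1)
    rw [h2] at this
    exact this
  · intro c hc x hx
    obtain ⟨hc1, hc2⟩ := hpick c hc
    obtain ⟨hx1, hx2⟩ := hpick x hx
    show x - R.pair (pick c) x • c ∈ S
    have hroot : pick x - R.pair (pick x) (R.coroot (pick c)) • pick c ∈ R' :=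
      R.refl_mem_comp hcomp hc1 hx1
    have hcor := R.coroot_sre (hcomp.2.1 hc1) (hcomp.2.1 hx1)
    rw [hS, Finset.mem_image]
    refine ⟨pick x - R.pair (pick x) (R.coroot (pick c)) • pick c, hroot, ?_⟩
    rw [hcor, hx2, hc2]
  · intro c hc
    show R.pair (pick c) z = 0
    exact h (pick c) (hpick c hc).1

/-- The rank-two master lemma: finiteness bounds the Cartan integers. -/
lemma rank2 {β γ : R.X} (hβ : β ∈ R.R0) (hγ : γ ∈ R.R0)
    (ha : R.pair γ (R.coroot β) ≠ 0) :
    R.pair β (R.coroot γ) ≠ 0 ∧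
    1 ≤ R.pair γ (R.coroot β) * R.pair β (R.coroot γ) ∧
    R.pair γ (R.coroot β) * R.pair β (R.coroot γ) ≤ 4 ∧
    (R.pair γ (R.coroot β) * R.pair β (R.coroot γ) = 4 →
      R.pair γ (R.coroot β) • β = (2:ℤ) • γ) := by
  classical
  set a := R.pair γ (R.coroot β) with hadef
  set b := R.pair β (R.coroot γ) with hbdef
  have hβ0 : β ≠ 0 := R.coroot_ne_zero hβ
  have hγ0 : γ ≠ 0 := R.coroot_ne_zero hγ
  set u : Module.End ℤ R.X := R.sre β * R.sre γ with hu
  have hu_mem : ∀ x ∈ R.R0, u x ∈ R.R0 := fun x hx =>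
    R.sre_mem hβ _ (R.sre_mem hγ _ hx)
  have hupow : ∀ n : ℕ, ∀ x ∈ R.R0, (u ^ n) x ∈ R.R0 := by
    intro n
    induction n with
    | zero => intro x hx; simpa using hx
    | succ n ih =>
      intro x hx
      rw [pow_succ, Module.End.mul_apply]
      exact ih _ (hu_mem x hx)
  have huγ : u γ = a • β - γ := by
    have h1 : R.sre γ γ = γ - (2:ℤ) • γ := by rw [sre_apply, R.pair_self γ hγ]
    have h2 : R.pair (γ - (2:ℤ) • γ) (R.coroot β) = -a := by
      rw [R.pair_sub_left, R.pair_smul_left, ← hadef]; ring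
    show R.sre β (R.sre γ γ) = _
    rw [h1, sre_apply, h2]
    module
  have huβ : u β = (a * b - 1) • β - b • γ := by
    have h1 : R.sre γ β = β - b • γ := by rw [sre_apply, ← hbdef]
    have h2 : R.pair (β - b • γ) (R.coroot β) = 2 - b * a := by
      rw [R.pair_sub_left, R.pair_smul_left, ← hadef, R.pair_self β hβ]
    show R.sre β (R.sre γ β) = _
    rw [h1, sre_apply, h2]
    module
  clear_value u
  have hb : b ≠ 0 := by
    intro hb0
    have huβ' : u β = -β := by rw [huβ, hb0]; module
    have h2γ : (u ^ 2) γ = γ - (2 * a) • β := by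
      rw [pow_two, Module.End.mul_apply, huγ, map_sub, map_smul, huβ', huγ]
      module
    have h2β : (u ^ 2) β = β := by
      rw [pow_two, Module.End.mul_apply, huβ', map_neg, huβ', neg_neg]
    have hrec : ∀ n : ℕ, (u ^ (2 * n)) γ = γ - ((n : ℤ) * (2 * a)) • β := by
      intro n
      induction n with
      | zero => simp
      | succ n ih =>
        have he : 2 * (n + 1) = 2 + 2 * n := by ring
        rw [he, pow_add, Module.End.mul_apply, ih, map_sub, map_smul, h2γ, h2β]
        push_cast
        module
    have hinj : Function.Injective (fun n : ℕ => γ - ((n : ℤ) * (2 * a)) • β) := by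
      intro n m hnm
      simp only at hnm
      have h3 : ((n : ℤ) * (2 * a)) • β = ((m : ℤ) * (2 * a)) • β :=
        sub_right_injective hnm
      have h4 := smul_left_injective ℤ hβ0 h3
      have h5 : (n : ℤ) = m := by
        have h2a : (2 : ℤ) * a ≠ 0 := by
          intro h; apply ha; omega
        exact mul_right_cancel₀ h2a h4
      exact_mod_cast h5
    refine Set.infinite_of_injective_forall_mem hinj (fun n => ?_) R.R0.finite_toSet
    rw [← hrec n]
    exact hupow _ γ hγ
  have hu2γ : (u ^ 2) γ = (a * b - 2) • (u γ) - γ := by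
    rw [pow_two, Module.End.mul_apply, huγ, map_sub, map_smul, huβ, huγ]
    module
  have hrecγ : ∀ n : ℕ, (u ^ (n + 2)) γ = (a * b - 2) • ((u ^ (n + 1)) γ) - (u ^ n) γ := by
    intro n
    have h1 : u ^ (n + 2) = u ^ n * u ^ 2 := by rw [← pow_add]
    have h2 : u ^ (n + 1) = u ^ n * u := pow_succ u n
    simp only [h1, Module.End.mul_apply, hu2γ, map_sub, map_smul, h2]
  set φ : ℕ → ℤ := fun n => R.pair ((u ^ n) γ) (R.coroot γ) with hφ
  have hφ0 : φ 0 = 2 := by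
    simp only [hφ, pow_zero]
    show R.pair γ (R.coroot γ) = 2
    exact R.pair_self γ hγ
  have hφ1 : φ 1 = a * b - 2 := by
    simp only [hφ, pow_one]
    rw [huγ, R.pair_sub_left, R.pair_smul_left, ← hbdef, R.pair_self γ hγ]
  have hφrec : ∀ n, φ (n + 2) = (a * b - 2) * φ (n + 1) - φ n := by
    intro n
    simp only [hφ]
    rw [hrecγ n, R.pair_sub_left, R.pair_smul_left]
  have htb : ¬ (3 ≤ |a * b - 2|) := by
    intro h3
    have hgrow : ∀ n, 2 ≤ |φ n| ∧ |φ n| + 1 ≤ |φ (n + 1)| := by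
      intro n
      induction n with
      | zero =>
        refine ⟨by rw [hφ0]; norm_num, ?_⟩
        rw [hφ0, hφ1]
        have habs2 : |(2:ℤ)| = 2 := by norm_num
        rw [habs2]
        linarith
      | succ n ih =>
        obtain ⟨ih1, ih2⟩ := ih
        refine ⟨by linarith, ?_⟩
        have hr := hφrec n
        have habs : |a * b - 2| * |φ (n + 1)| - |φ n| ≤ |φ (n + 2)| := by
          calc |a * b - 2| * |φ (n + 1)| - |φ n|
              = |(a * b - 2) * φ (n + 1)| - |φ n| := by rw [abs_mul]
            _ ≤ |(a * b - 2) * φ (n + 1) - φ n| := abs_sub_abs_le_abs_sub _ _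
            _ = |φ (n + 2)| := by rw [← hr]
        nlinarith [abs_nonneg (φ (n + 1))]
    have hsm : StrictMono (fun n => |φ n|) :=
      strictMono_nat_of_lt_succ (fun n => by linarith [(hgrow n).2])
    have hinj : Function.Injective (fun n : ℕ => (u ^ n) γ) := by
      intro n m hnm
      simp only at hnm
      have heq : |φ n| = |φ m| := by
        simp only [hφ, hnm]
      exact hsm.injective heq
    exact Set.infinite_of_injective_forall_mem hinj (fun n => hupow n γ hγ)
      R.R0.finite_toSet
  push_neg at htb
  rw [abs_lt] at htb
  have hab0 : a * b ≠ 0 := mul_ne_zero ha hb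
  refine ⟨hb, by omega, by omega, ?_⟩
  intro hab4
  have huγγ : u γ - γ = a • β - (2:ℤ) • γ := by rw [huγ]; module
  have hl : u (u γ) = (u ^ 2) γ := by rw [pow_two, Module.End.mul_apply]
  have huw : u (u γ - γ) = u γ - γ := by
    rw [map_sub, hl, hu2γ, hab4]
    have h42 : (4 : ℤ) - 2 = 2 := by norm_num
    rw [h42, two_smul]
    abel
  have hiter : ∀ n : ℕ, (u ^ n) γ = γ + (n : ℤ) • (u γ - γ) := by
    intro n
    induction n with
    | zero => simp
    | succ n ih =>
      have h2 : u ^ (n + 1) = u * u ^ n := (pow_succ' u n)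
      rw [h2, Module.End.mul_apply, ih, map_add, map_smul, huw]
      push_cast
      module
  by_contra hne
  have hwne : u γ - γ ≠ 0 := by
    rw [huγγ]
    intro h
    apply hne
    exact sub_eq_zero.mp h
  have hinj : Function.Injective (fun n : ℕ => (u ^ n) γ) := by
    intro n m hnm
    simp only at hnm
    rw [hiter n, hiter m] at hnm
    have h3 : (n : ℤ) • (u γ - γ) = (m : ℤ) • (u γ - γ) := add_left_cancel hnm
    have h4 := smul_left_injective ℤ hwne h3
    exact_mod_cast h4
  exact Set.infinite_of_injective_forall_mem hinj (fun n => hupow n γ hγ)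
    R.R0.finite_toSet

end RootDatum

lemma int_pair_cases {a b : ℤ} (h2 : 2 ∣ a) (ha : a ≠ 0) (h1 : 1 ≤ a * b) (h4 : a * b ≤ 4) :
    ((a = 2 ∨ a = -2) ∧ (b = 1 ∨ b = -1) ∧ a * b ≠ 4) ∨
    (a * b = 4 ∧ (a = 2 ∨ a = -2 ∨ a = 4 ∨ a = -4)) := by
  obtain ⟨k, rfl⟩ := h2
  have hk : k ≠ 0 := by rintro rfl; simp at ha
  have hkb : k * b = 1 ∨ k * b = 2 := by
    have e : 2 * k * b = 2 * (k * b) := by ring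
    rw [e] at h1 h4
    omega
  rcases hkb with hkb | hkb
  · rcases Int.mul_eq_one_iff_eq_one_or_neg_one.mp hkb with ⟨rfl, rfl⟩ | ⟨rfl, rfl⟩
    · left; norm_num
    · left; norm_num
  · right
    constructor
    · have e : 2 * k * b = 2 * (k * b) := by ring
      rw [e, hkb]
      norm_num
    · have hdvd : k ∣ 2 := ⟨b, hkb.symm⟩
      have hle1 : k ≤ 2 := Int.le_of_dvd (by norm_num) hdvd
      have hle2 : -k ≤ 2 := Int.le_of_dvd (by norm_num) ((neg_dvd).mpr hdvd)
      omega


namespace RootDatum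

variable (R : RootDatum)

lemma pair_cases {β γ : R.X} (hβ : β ∈ R.R0) (hγ : γ ∈ R.R0)
    (hae : 2 ∣ R.pair γ (R.coroot β)) (ha0 : R.pair γ (R.coroot β) ≠ 0) :
    ((R.pair γ (R.coroot β) = 2 ∨ R.pair γ (R.coroot β) = -2) ∧
       (R.pair β (R.coroot γ) = 1 ∨ R.pair β (R.coroot γ) = -1)) ∨
    ((R.pair γ (R.coroot β) = 2 ∧ γ = β) ∨ (R.pair γ (R.coroot β) = -2 ∧ γ = -β)) := by
  obtain ⟨hb0, h1, h4, hM2⟩ := R.rank2 hβ hγ ha0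
  rcases int_pair_cases hae ha0 h1 h4 with ⟨haa, hbb, _⟩ | ⟨hab4, haa⟩
  · exact Or.inl ⟨haa, hbb⟩
  · have hw := hM2 hab4
    have h2ne : (2:ℤ) ≠ 0 := by norm_num
    rcases haa with h|h|h|h
    · rw [h] at hw
      exact Or.inr (Or.inl ⟨h, (smul_right_injective R.X h2ne hw).symm⟩)
    · rw [h] at hw
      have hw' : (2:ℤ) • (-β) = (2:ℤ) • γ := by
        rw [smul_neg, ← neg_smul]
        exact hw
      exact Or.inr (Or.inr ⟨h, (smul_right_injective R.X h2ne hw').symm⟩)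
    · exfalso
      rw [h] at hw
      have h42 : (4:ℤ) = 2 * 2 := by norm_num
      rw [h42, ← smul_smul] at hw
      have hγβ : (2:ℤ) • β = γ := smul_right_injective R.X h2ne hw
      rw [← hγβ] at hγ
      have := R.reduced β hβ 2 hγ
      omega
    · exfalso
      rw [h] at hw
      have h42 : (-4:ℤ) = 2 * (-2) := by norm_num
      rw [h42, ← smul_smul] at hw
      have hγβ : (-2:ℤ) • β = γ := smul_right_injective R.X h2ne hw
      rw [← hγβ] at hγ
      have := R.reduced β hβ (-2) hγ
      omega

/-- L1: a root of the component pairing nontrivially with a "doubled" root lies in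
the span of the doubled roots. -/
lemma mem_spanE {R' : Finset R.X} (hcomp : R.IsIrreducibleComponent R')
    {ρ β : R.X} (hρ : ρ ∈ R') (hβ : β ∈ R') {y : R.Y} (hy : R.coroot β = (2:ℤ) • y)
    (hne : R.pair ρ (R.coroot β) ≠ 0) :
    ρ ∈ Submodule.span ℤ {δ : R.X | δ ∈ R' ∧ ∃ y : R.Y, R.coroot δ = (2:ℤ) • y} := by
  have hρ0 := hcomp.2.1 hρ
  have hβ0 := hcomp.2.1 hβ
  have hae : 2 ∣ R.pair ρ (R.coroot β) := ⟨R.pair ρ y, by rw [hy, R.pair_smul_right]⟩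
  rcases R.pair_cases hβ0 hρ0 hae hne with ⟨haa, hbb⟩ | hout
  · have hρ'R : β - R.pair β (R.coroot ρ) • ρ ∈ R' := R.refl_mem_comp hcomp hρ hβ
    have hcor := R.coroot_sre hρ0 hβ0
    have hρ'E : (β - R.pair β (R.coroot ρ) • ρ)
        ∈ {δ : R.X | δ ∈ R' ∧ ∃ y : R.Y, R.coroot δ = (2:ℤ) • y} := by
      refine ⟨hρ'R, ?_⟩
      rcases haa with h2 | h2
      · exact ⟨y - R.coroot ρ, by rw [hcor, h2, hy]; module⟩
      · exact ⟨y + R.coroot ρ, by rw [hcor, h2, hy]; module⟩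
    have hβE : β ∈ {δ : R.X | δ ∈ R' ∧ ∃ y : R.Y, R.coroot δ = (2:ℤ) • y} := ⟨hβ, y, hy⟩
    have hρval : ρ = R.pair β (R.coroot ρ) • β
        - R.pair β (R.coroot ρ) • (β - R.pair β (R.coroot ρ) • ρ) := by
      rcases hbb with h1 | h1 <;> rw [h1] <;> module
    rw [hρval]
    exact Submodule.sub_mem _ (Submodule.smul_mem _ _ (Submodule.subset_span hβE))
      (Submodule.smul_mem _ _ (Submodule.subset_span hρ'E))
  · rcases hout with ⟨_, h⟩ | ⟨_, h⟩
    · rw [h]; exact Submodule.subset_span ⟨hβ, y, hy⟩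
    · rw [h]; exact Submodule.neg_mem _ (Submodule.subset_span ⟨hβ, y, hy⟩)

/-- L2: the coroot of such a root lies in the span of the halved coroots. -/
lemma coroot_mem_spanHalf {R' : Finset R.X} (hcomp : R.IsIrreducibleComponent R')
    {ρ β : R.X} (hρ : ρ ∈ R') (hβ : β ∈ R') {y : R.Y} (hy : R.coroot β = (2:ℤ) • y)
    (hne : R.pair ρ (R.coroot β) ≠ 0) :
    R.coroot ρ ∈ Submodule.span ℤ {w : R.Y | ∃ δ ∈ R', R.coroot δ = (2:ℤ) • w} := by
  have hρ0 := hcomp.2.1 hρ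
  have hβ0 := hcomp.2.1 hβ
  have hae : 2 ∣ R.pair ρ (R.coroot β) := ⟨R.pair ρ y, by rw [hy, R.pair_smul_right]⟩
  have hymem : y ∈ {w : R.Y | ∃ δ ∈ R', R.coroot δ = (2:ℤ) • w} := ⟨β, hβ, hy⟩
  rcases R.pair_cases hβ0 hρ0 hae hne with ⟨haa, hbb⟩ | hout
  · have hρ'R : β - R.pair β (R.coroot ρ) • ρ ∈ R' := R.refl_mem_comp hcomp hρ hβ
    have hcor := R.coroot_sre hρ0 hβ0
    rcases haa with h2 | h2
    · have hy' : R.coroot (β - R.pair β (R.coroot ρ) • ρ) = (2:ℤ) • (y - R.coroot ρ) := by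
        rw [hcor, h2, hy]; module
      have h1 : R.coroot ρ = y - (y - R.coroot ρ) := by module
      rw [h1]
      exact Submodule.sub_mem _ (Submodule.subset_span hymem)
        (Submodule.subset_span ⟨_, hρ'R, hy'⟩)
    · have hy' : R.coroot (β - R.pair β (R.coroot ρ) • ρ) = (2:ℤ) • (y + R.coroot ρ) := by
        rw [hcor, h2, hy]; module
      have h1 : R.coroot ρ = (y + R.coroot ρ) - y := by module
      rw [h1]
      exact Submodule.sub_mem _ (Submodule.subset_span ⟨_, hρ'R, hy'⟩)
        (Submodule.subset_span hymem)
  · rcases hout with ⟨_, h⟩ | ⟨_, h⟩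
    · rw [h, hy]
      exact Submodule.smul_mem _ _ (Submodule.subset_span hymem)
    · rw [h, R.coroot_neg hβ0, hy]
      exact Submodule.neg_mem _ (Submodule.smul_mem _ _ (Submodule.subset_span hymem))

/-- Connectivity: in case (ii) every root of the component pairs nontrivially with
some doubled root. -/
lemma exists_E_pair {R' : Finset R.X} (hcomp : R.IsIrreducibleComponent R')
    {α₀ : R.X} (hα₀ : α₀ ∈ R') {y₀ : R.Y} (hy₀ : R.coroot α₀ = (2:ℤ) • y₀) :
    ∀ ρ ∈ R', ∃ β, (β ∈ R' ∧ ∃ y : R.Y, R.coroot β = (2:ℤ) • y) ∧ R.pair ρ (R.coroot β) ≠ 0 := by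
  classical
  intro ρ hρ
  by_contra hcon
  push_neg at hcon
  set P : R.X → Prop := fun δ => ∀ β ∈ R', (∃ y : R.Y, R.coroot β = (2:ℤ) • y) →
    R.pair δ (R.coroot β) = 0 with hPdef
  set A := R'.filter P with hA
  set B := R'.filter (fun δ => ¬ P δ) with hB
  have hρA : ρ ∈ A := Finset.mem_filter.mpr ⟨hρ, fun β hβ hy => hcon β ⟨hβ, hy⟩⟩
  have hα₀B : α₀ ∈ B := by
    refine Finset.mem_filter.mpr ⟨hα₀, ?_⟩
    intro hcontra
    have h := hcontra α₀ hα₀ ⟨y₀, hy₀⟩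
    rw [R.pair_self α₀ (hcomp.2.1 hα₀)] at h
    norm_num at h
  have hABi : A ∩ B = ∅ := by
    refine Finset.eq_empty_iff_forall_notMem.mpr (fun x hx => ?_)
    rw [Finset.mem_inter, hA, hB, Finset.mem_filter, Finset.mem_filter] at hx
    exact hx.2.2 hx.1.2
  obtain ⟨α, hαA, β, hβB, hpair⟩ := hcomp.2.2.2 A B
    (Finset.filter_union_filter_not_eq P R') hABi
    ⟨ρ, hρA⟩ ⟨α₀, hα₀B⟩
  obtain ⟨hα, hαP⟩ := Finset.mem_filter.mp hαA
  obtain ⟨hβ', hβP⟩ := Finset.mem_filter.mp hβB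
  simp only [hPdef] at hβP
  push_neg at hβP
  obtain ⟨γ₀, hγ₀R, hγ₀y, hγ₀p⟩ := hβP
  have hspanB : ∀ δ ∈ B, δ ∈ Submodule.span ℤ
      {δ : R.X | δ ∈ R' ∧ ∃ y : R.Y, R.coroot δ = (2:ℤ) • y} := by
    intro δ hδ
    obtain ⟨hδ', hδP⟩ := Finset.mem_filter.mp hδ
    simp only [hPdef] at hδP
    push_neg at hδP
    obtain ⟨γ, hγR, hγy, hγp⟩ := hδP
    obtain ⟨yy, hyy⟩ := hγy
    exact R.mem_spanE hcomp hδ' hγR hyy hγp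
  have hsR : α - R.pair α (R.coroot β) • β ∈ R' := R.refl_mem_comp hcomp hβ' hα
  have hsB : α - R.pair α (R.coroot β) • β ∈ B := by
    refine Finset.mem_filter.mpr ⟨hsR, ?_⟩
    intro hcontra
    have h1 := hcontra γ₀ hγ₀R hγ₀y
    rw [R.pair_sub_left, R.pair_smul_left, hαP γ₀ hγ₀R hγ₀y, zero_sub, neg_eq_zero] at h1
    rcases mul_eq_zero.mp h1 with hh | hh
    · exact hpair hh
    · exact hγ₀p hh
  have hαspan : α ∈ Submodule.span ℤ
      {δ : R.X | δ ∈ R' ∧ ∃ y : R.Y, R.coroot δ = (2:ℤ) • y} := by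
    have h1 := hspanB _ hsB
    have h2 := hspanB β hβB
    have heq : α = (α - R.pair α (R.coroot β) • β) + R.pair α (R.coroot β) • β := by module
    rw [heq]
    exact Submodule.add_mem _ h1 (Submodule.smul_mem _ _ h2)
  have hkill : ∀ δ ∈ {δ : R.X | δ ∈ R' ∧ ∃ y : R.Y, R.coroot δ = (2:ℤ) • y},
      R.pair δ (R.coroot α) = 0 := by
    rintro δ ⟨hδR, hδy⟩
    by_contra hδ0
    exact (R.rank2 (hcomp.2.1 hα) (hcomp.2.1 hδR) hδ0).1 (hαP δ hδR hδy)
  have hfin := R.pair_span_left hkill α hαspan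
  rw [R.pair_self α (hcomp.2.1 hα)] at hfin
  norm_num at hfin

/-- The key construction in case (ii): integral projection onto the component. -/
lemma typeC_key {R' : Finset R.X} (hcomp : R.IsIrreducibleComponent R')
    (hE0 : ∃ α ∈ R', ∃ y : R.Y, R.coroot α = y + y) :
    ∀ x : R.X, ∃ x' ∈ Submodule.span ℤ (R' : Set R.X),
      ∀ ρ ∈ R', R.pair (x - x') (R.coroot ρ) = 0 := by
  classical
  obtain ⟨α₀, hα₀, y₀, hy₀⟩ := hE0
  have hy₀' : R.coroot α₀ = (2:ℤ) • y₀ := by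
    rw [hy₀]
    exact (two_smul ℤ y₀).symm
  set E : Finset R.X := R'.filter (fun β => ∃ y : R.Y, R.coroot β = (2:ℤ) • y) with hE
  have hEmem : ∀ β, β ∈ E ↔ (β ∈ R' ∧ ∃ y : R.Y, R.coroot β = (2:ℤ) • y) := by
    intro β; rw [hE, Finset.mem_filter]
  have h2ne : (2:ℤ) ≠ 0 := by norm_num
  have hTne : ∀ β ∈ E, β ≠ -β := by
    intro β hβ h
    have hβ0 : β ∈ R.R0 := hcomp.2.1 ((hEmem β).mp hβ).1
    have hs : (2:ℤ) • β = 0 := by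
      rw [two_smul]
      nth_rewrite 2 [h]
      exact add_neg_cancel β
    rcases smul_eq_zero.mp hs with hh | hh
    · exact h2ne hh
    · exact R.coroot_ne_zero hβ0 hh
  obtain ⟨Eb, hEbsub, hcov, hopp⟩ := exists_signreps E hTne
  set yh : R.X → R.Y := fun β =>
    if h : ∃ y : R.Y, R.coroot β = (2:ℤ) • y then h.choose else 0 with hyhdef
  have hyh : ∀ β ∈ E, R.coroot β = (2:ℤ) • yh β := by
    intro β hβ
    obtain ⟨-, hex⟩ := (hEmem β).mp hβ
    simp only [hyhdef, dif_pos hex]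
    exact hex.choose_spec
  have hpairyh : ∀ β ∈ E, ∀ x0 : R.X, 2 * R.pair x0 (yh β) = R.pair x0 (R.coroot β) := by
    intro β hβ x0
    rw [hyh β hβ, R.pair_smul_right]
  intro x
  refine ⟨∑ β ∈ Eb, R.pair x (yh β) • β, ?_, ?_⟩
  · apply Submodule.sum_mem
    intro β hβ
    exact Submodule.smul_mem _ _ (Submodule.subset_span ((hEmem β).mp (hEbsub hβ)).1)
  · intro ρ hρ
    have horthEb : ∀ β ∈ Eb, ∀ γ ∈ Eb, β ≠ γ → R.pair β (R.coroot γ) = 0 := by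
      intro β hβ γ hγ hne
      by_contra h0
      have hβE := (hEmem β).mp (hEbsub hβ)
      have hγE := (hEmem γ).mp (hEbsub hγ)
      obtain ⟨yβ, hyβ⟩ := hβE.2
      obtain ⟨yγ, hyγ⟩ := hγE.2
      have hae : 2 ∣ R.pair β (R.coroot γ) := ⟨R.pair β yγ, by rw [hyγ, R.pair_smul_right]⟩
      rcases R.pair_cases (hcomp.2.1 hγE.1) (hcomp.2.1 hβE.1) hae h0 with ⟨-, hbb⟩ | hout
      · have hbe : 2 ∣ R.pair γ (R.coroot β) := ⟨R.pair γ yβ, by rw [hyβ, R.pair_smul_right]⟩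
        obtain ⟨k, hk⟩ := hbe
        rcases hbb with hh | hh <;> omega
      · rcases hout with ⟨-, hh⟩ | ⟨-, hh⟩
        · exact hne hh
        · exact hopp γ hγ (hh ▸ hβ)
    have hyhval : ∀ γ ∈ Eb, R.pair (∑ β ∈ Eb, R.pair x (yh β) • β) (yh γ)
        = R.pair x (yh γ) := by
      intro γ hγ
      rw [R.pair_sum_left]
      have hterm : ∀ β ∈ Eb, R.pair (R.pair x (yh β) • β) (yh γ)
          = if β = γ then R.pair x (yh γ) else 0 := by
        intro β hβ
        rw [R.pair_smul_left]
        by_cases hbg : β = γ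
        · subst hbg
          rw [if_pos rfl]
          have hh2 : 2 * R.pair β (yh β) = 2 := by
            rw [hpairyh β (hEbsub hβ) β,
              R.pair_self β (hcomp.2.1 ((hEmem β).mp (hEbsub hβ)).1)]
          have hone : R.pair β (yh β) = 1 := by omega
          rw [hone, mul_one]
        · rw [if_neg hbg]
          have hh2 : 2 * R.pair β (yh γ) = 0 := by
            rw [hpairyh γ (hEbsub hγ) β, horthEb β hβ γ hγ hbg]
          have hzero : R.pair β (yh γ) = 0 := by omega
          rw [hzero, mul_zero]
      rw [Finset.sum_congr rfl hterm,
        Finset.sum_ite_eq' Eb γ (fun _ => R.pair x (yh γ)), if_pos hγ]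
    have hkillHS : ∀ w ∈ {w : R.Y | ∃ δ ∈ R', R.coroot δ = (2:ℤ) • w},
        R.pair (x - ∑ β ∈ Eb, R.pair x (yh β) • β) w = 0 := by
      rintro w ⟨δ, hδ, hδw⟩
      have hδE : δ ∈ E := (hEmem δ).mpr ⟨hδ, w, hδw⟩
      rcases hcov δ hδE with hδb | hδb
      · have hweq : yh δ = w := by
          have h1 := hyh δ hδE
          rw [hδw] at h1
          exact (smul_right_injective R.Y h2ne h1).symm
        rw [← hweq, R.pair_sub_left, hyhval δ hδb, sub_self]
      · have hnegE : -δ ∈ E := by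
          refine (hEmem _).mpr ⟨R.neg_mem_comp hcomp hδ, -w, ?_⟩
          rw [R.coroot_neg (hcomp.2.1 hδ), hδw, smul_neg]
        have hweq : yh (-δ) = -w := by
          have h1 := hyh (-δ) hnegE
          rw [R.coroot_neg (hcomp.2.1 hδ), hδw] at h1
          have h2 : (2:ℤ) • (-w) = (2:ℤ) • yh (-δ) := by
            rw [smul_neg]
            exact h1
          exact (smul_right_injective R.Y h2ne h2).symm
        have hw2 : w = - yh (-δ) := by rw [hweq, neg_neg]
        rw [hw2, R.pair_neg_right, R.pair_sub_left, hyhval _ hδb, sub_self, neg_zero]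
    obtain ⟨β, ⟨hβR, hβy⟩, hβp⟩ := R.exists_E_pair hcomp hα₀ hy₀' ρ hρ
    obtain ⟨yβ, hyβ⟩ := hβy
    have hcorspan := R.coroot_mem_spanHalf hcomp hρ hβR hyβ hβp
    exact R.pair_span_right hkillHS _ hcorspan

lemma typeC_saturated {R' : Finset R.X} (hcomp : R.IsIrreducibleComponent R')
    (hE0 : ∃ α ∈ R', ∃ y : R.Y, R.coroot α = y + y) :
    R.Xsub R' = Submodule.span ℤ (R' : Set R.X) := by
  apply le_antisymm
  · intro x hx
    obtain ⟨x', hx', hkill⟩ := R.typeC_key hcomp hE0 x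
    obtain ⟨n, hn, hnx⟩ := hx
    have hmem : n • (x - x') ∈ Submodule.span ℤ (R' : Set R.X) := by
      rw [smul_sub]
      exact Submodule.sub_mem _ hnx (Submodule.smul_mem _ _ hx')
    have h0 : n • (x - x') = 0 := by
      apply R.nondeg_comp_left hcomp hmem
      intro α hα
      rw [R.pair_smul_left, hkill α hα, mul_zero]
    have h1 : x - x' = 0 := by
      rcases smul_eq_zero.mp h0 with h | h
      · exact absurd h hn
      · exact h
    rw [sub_eq_zero] at h1
    rw [h1]
    exact hx'
  · intro x hx
    exact ⟨1, one_ne_zero, by simpa using hx⟩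

lemma propP_weight {R' : Finset R.X} (hw : R.XsubIsWeightLattice R') :
    ∀ x : R.X, ∃ x' ∈ R.Xsub R', ∀ α ∈ R', R.pair (x - x') (R.coroot α) = 0 := by
  intro x
  obtain ⟨x', hx', hx'p⟩ := hw (((R.pair x).toIntLinearMap).comp
    (Submodule.span ℤ (R.coroot '' (R' : Set R.X))).subtype)
  refine ⟨x', hx', fun α hα => ?_⟩
  have hmem : R.coroot α ∈ Submodule.span ℤ (R.coroot '' (R' : Set R.X)) :=
    Submodule.subset_span ⟨α, hα, rfl⟩
  have h1 := hx'p ⟨R.coroot α, hmem⟩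
  simp only [LinearMap.comp_apply, Submodule.coe_subtype,
    AddMonoidHom.coe_toIntLinearMap] at h1
  rw [R.pair_sub_left, h1, sub_self]

/-- The `Y`-side complement, via the rank/duality lemma. -/
lemma ycompl {R' : Finset R.X} (hcomp : R.IsIrreducibleComponent R')
    {X2 : Submodule ℤ R.X} (hXc : IsCompl (R.Xsub R') X2)
    (hX2perp : ∀ x ∈ X2, ∀ α ∈ R', R.pair x (R.coroot α) = 0) :
    ∀ y : R.Y, ∃ y' ∈ R.Ysub R', ∀ α ∈ R', R.pair α (y - y') = 0 := by
  intro y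
  set π := X2.linearProjOfIsCompl (R.Xsub R') hXc.symm with hπdef
  obtain ⟨y'', hy'', -⟩ := R.pair_perfY (AddMonoidHom.mk' (fun x0 => R.pair (π x0 : R.X) y)
    (by
      intro a b
      show R.pair ((π (a + b) : ↥X2) : R.X) y
          = R.pair ((π a : ↥X2) : R.X) y + R.pair ((π b : ↥X2) : R.X) y
      rw [map_add, Submodule.coe_add, R.pair_add_left]))
  have hy''ap : ∀ x0 : R.X, R.pair x0 y'' = R.pair (π x0 : R.X) y := hy''
  have hπ0 : ∀ α ∈ R', R.pair α y'' = 0 := by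
    intro α hα
    have hmem : α ∈ R.Xsub R' := ⟨1, one_ne_zero, by simpa using Submodule.subset_span hα⟩
    have h1 := Submodule.linearProjOfIsCompl_apply_right hXc.symm ⟨α, hmem⟩
    have h2 := hy''ap α
    rw [show π α = 0 from h1] at h2
    simpa using h2
  have hy'X2 : ∀ x ∈ X2, R.pair x (y - y'') = 0 := by
    intro x hx
    have h1 := Submodule.linearProjOfIsCompl_apply_left hXc.symm ⟨x, hx⟩
    have h2 := hy''ap x
    rw [show π x = ⟨x, hx⟩ from h1] at h2
    rw [R.pair_sub_right, h2, sub_self]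
  let p : ↥(Submodule.span ℤ (R' : Set R.X)) →ₗ[ℤ]
      ↥(Submodule.span ℤ (R.coroot '' (R' : Set R.X))) →ₗ[ℤ] ℤ :=
    LinearMap.mk₂ ℤ (fun u v => R.pair u v)
      (fun m₁ m₂ n => by simp only [Submodule.coe_add]; rw [R.pair_add_left])
      (fun c m n => by simp only [Submodule.coe_smul]; rw [R.pair_smul_left, smul_eq_mul])
      (fun m n₁ n₂ => by simp only [Submodule.coe_add]; rw [R.pair_add_right])
      (fun c m n => by simp only [Submodule.coe_smul]; rw [R.pair_smul_right, smul_eq_mul])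
  have hUnd : ∀ u, (∀ v, p u v = 0) → u = 0 := by
    intro u hu
    have h := R.nondeg_comp_left hcomp u.2
      (fun α hα => hu ⟨R.coroot α, Submodule.subset_span ⟨α, hα, rfl⟩⟩)
    exact Subtype.ext h
  have hVnd : ∀ v, (∀ u, p u v = 0) → v = 0 := by
    intro v hv
    have h := R.nondeg_comp_right hcomp v.2
      (fun α hα => hv ⟨α, Submodule.subset_span hα⟩)
    exact Subtype.ext h
  obtain ⟨n, hn, v, hnv⟩ := lemR p hUnd hVnd
    ((AddMonoidHom.mk' (fun u : ↥(Submodule.span ℤ (R' : Set R.X)) =>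
        R.pair u (y - y''))
      (by
        intro a b
        show R.pair ((a + b : ↥(Submodule.span ℤ (R' : Set R.X))) : R.X) (y - y'')
            = _ + _
        rw [Submodule.coe_add, R.pair_add_left])).toIntLinearMap)
  have hwzero : n • (y - y'') - (v : R.Y) = 0 := by
    apply R.pair_right_eq_zero
    intro x0
    have hx0 : x0 ∈ R.Xsub R' ⊔ X2 := by
      rw [codisjoint_iff.mp hXc.codisjoint]
      trivial
    obtain ⟨x1, hx1, x2, hx2, rfl⟩ := Submodule.mem_sup.mp hx0
    have hUkill : ∀ z, ∀ hz : z ∈ Submodule.span ℤ (R' : Set R.X),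
        R.pair z (n • (y - y'') - (v : R.Y)) = 0 := by
      intro z hz
      have h1 : n * R.pair z (y - y'') = R.pair z (v : R.Y) := hnv ⟨z, hz⟩
      rw [R.pair_sub_right, R.pair_smul_right, h1, sub_self]
    have hx1kill : R.pair x1 (n • (y - y'') - (v : R.Y)) = 0 := by
      obtain ⟨m, hm, hmx⟩ := hx1
      have h := hUkill _ hmx
      rw [R.pair_smul_left] at h
      rcases mul_eq_zero.mp h with hh | hh
      · exact absurd hh hm
      · exact hh
    have hx2kill : R.pair x2 (n • (y - y'') - (v : R.Y)) = 0 := by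
      rw [R.pair_sub_right, R.pair_smul_right]
      have hA : R.pair x2 (y - y'') = 0 := hy'X2 x2 hx2
      have hB : R.pair x2 (v : R.Y) = 0 := by
        apply R.pair_span_right (s := R.coroot '' (R' : Set R.X)) ?_ _ v.2
        rintro w ⟨α, hα, rfl⟩
        exact hX2perp x2 hx2 α hα
      rw [hA, hB, mul_zero, sub_zero]
    rw [R.pair_add_left, hx1kill, hx2kill, add_zero]
  have hy'mem : y - y'' ∈ R.Ysub R' := by
    refine ⟨n, hn, ?_⟩
    have heq : n • (y - y'') = (v : R.Y) := sub_eq_zero.mp hwzero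
    rw [heq]
    exact v.2
  refine ⟨y - y'', hy'mem, fun α hα => ?_⟩
  have heq : y - (y - y'') = y'' := by abel
  rw [heq]
  exact hπ0 α hα

/-- The orthogonal complement `X₂` of the component inside `X`. -/
def perpX (R' : Finset R.X) : Submodule ℤ R.X where
  carrier := {x | ∀ α ∈ R', R.pair x (R.coroot α) = 0}
  zero_mem' := by
    intro α _
    simp
  add_mem' := by
    intro a b ha hb α hα
    rw [R.pair_add_left, ha α hα, hb α hα, add_zero]
  smul_mem' := by
    intro c x hx α hα
    rw [R.pair_smul_left, hx α hα, mul_zero]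

lemma mem_perpX {R' : Finset R.X} {x : R.X} :
    x ∈ R.perpX R' ↔ ∀ α ∈ R', R.pair x (R.coroot α) = 0 := Iff.rfl

/-- The orthogonal complement `Y₂` of the component inside `Y`. -/
def perpY (R' : Finset R.X) : Submodule ℤ R.Y where
  carrier := {y | ∀ α ∈ R', R.pair α y = 0}
  zero_mem' := by
    intro α _
    simp
  add_mem' := by
    intro a b ha hb α hα
    rw [R.pair_add_right, ha α hα, hb α hα, add_zero]
  smul_mem' := by
    intro c y hy α hα
    rw [R.pair_smul_right, hy α hα, mul_zero]

lemma mem_perpY {R' : Finset R.X} {y : R.Y} :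
    y ∈ R.perpY R' ↔ ∀ α ∈ R', R.pair α y = 0 := Iff.rfl

end RootDatum

/-- **Proposition.**  Suppose `R = (X, R₀, Y, R₀^∨)` is a root datum and `R₀' ⊆ R₀` is an
irreducible component of `R₀`.  Put `X' = X ∩ ℝR₀'`, `Y' = Y ∩ ℝ(R₀')^∨`.  Assume that
either (i) `X' = P(R₀')`, or (ii) there exists `α ∈ R₀'` with `α^∨ ∈ 2Y`.  Then
`R' = (X', R₀', Y', (R₀')^∨)` is a root datum which is a direct summand of `R`; in
case (ii), `R'` has type `C_n^{(1)}`. -/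
theorem component_direct_summand (R : RootDatum) (R' : Finset R.X)
    (hcomp : R.IsIrreducibleComponent R')
    (h : R.XsubIsWeightLattice R' ∨ ∃ α ∈ R', ∃ y : R.Y, R.coroot α = y + y) :
    R.IsDirectSummand R' ∧
      ((∃ α ∈ R', ∃ y : R.Y, R.coroot α = y + y) → R.IsTypeC1 R') := by
  classical
  have hP : ∀ x : R.X, ∃ x' ∈ R.Xsub R', ∀ α ∈ R', R.pair (x - x') (R.coroot α) = 0 := by
    rcases h with hw | hC
    · exact R.propP_weight hw
    · intro x
      obtain ⟨x', hx', hk⟩ := R.typeC_key hcomp hC x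
      exact ⟨x', ⟨1, one_ne_zero, by simpa using hx'⟩, hk⟩
  have hdisjX : Disjoint (R.Xsub R') (R.perpX R') := by
    rw [Submodule.disjoint_def]
    intro x hx hx2
    obtain ⟨n, hn, hnx⟩ := hx
    have h0 : n • x = 0 := R.nondeg_comp_left hcomp hnx
      (fun α hα => by rw [R.pair_smul_left, (R.mem_perpX.mp hx2) α hα, mul_zero])
    rcases smul_eq_zero.mp h0 with hh | hh
    · exact absurd hh hn
    · exact hh
  have hcodisjX : Codisjoint (R.Xsub R') (R.perpX R') := by
    rw [codisjoint_iff, eq_top_iff]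
    intro x _
    obtain ⟨x', hx', hk⟩ := hP x
    exact Submodule.mem_sup.mpr ⟨x', hx', x - x', R.mem_perpX.mpr hk, by abel⟩
  have hXc : IsCompl (R.Xsub R') (R.perpX R') := ⟨hdisjX, hcodisjX⟩
  have hYP := R.ycompl hcomp hXc (fun x hx α hα => (R.mem_perpX.mp hx) α hα)
  have hdisjY : Disjoint (R.Ysub R') (R.perpY R') := by
    rw [Submodule.disjoint_def]
    intro y hy hy2
    obtain ⟨n, hn, hny⟩ := hy
    have h0 : n • y = 0 := R.nondeg_comp_right hcomp hny
      (fun α hα => by rw [R.pair_smul_right, (R.mem_perpY.mp hy2) α hα, mul_zero])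
    rcases smul_eq_zero.mp h0 with hh | hh
    · exact absurd hh hn
    · exact hh
  have hcodisjY : Codisjoint (R.Ysub R') (R.perpY R') := by
    rw [codisjoint_iff, eq_top_iff]
    intro y _
    obtain ⟨y', hy', hk⟩ := hYP y
    exact Submodule.mem_sup.mpr ⟨y', hy', y - y', R.mem_perpY.mpr hk, by abel⟩
  constructor
  · refine ⟨R.perpX R', R.perpY R', hXc, ⟨hdisjY, hcodisjY⟩, ?_, ?_, ?_, ?_⟩
    · intro α hα hαn
      exact R.mem_perpX.mpr (fun β hβ => (hcomp.2.2.1 β hβ α hα hαn).2)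
    · intro α hα hαn
      exact R.mem_perpY.mpr (fun β hβ => (hcomp.2.2.1 β hβ α hα hαn).1)
    · intro x hx y hy
      obtain ⟨n, hn, hnx⟩ := hx
      have hh := R.pair_span_left (fun u hu => (R.mem_perpY.mp hy) u hu) _ hnx
      rw [R.pair_smul_left] at hh
      rcases mul_eq_zero.mp hh with hh' | hh'
      · exact absurd hh' hn
      · exact hh'
    · intro x hx y hy
      obtain ⟨n, hn, hny⟩ := hy
      have hker : ∀ c ∈ R.coroot '' (R' : Set R.X), R.pair x c = 0 := by
        rintro c ⟨α, hα, rfl⟩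
        exact (R.mem_perpX.mp hx) α hα
      have hh := R.pair_span_right hker _ hny
      rw [R.pair_smul_right] at hh
      rcases mul_eq_zero.mp hh with hh' | hh'
      · exact absurd hh' hn
      · exact hh'
  · intro hC
    obtain ⟨α, hα, y, hy⟩ := hC
    refine ⟨R.typeC_saturated hcomp ⟨α, hα, y, hy⟩, α, hα, y, ⟨2, by norm_num, ?_⟩, hy⟩
    rw [show (2:ℤ) • y = y + y from two_smul ℤ y, ← hy]
    exact Submodule.subset_span ⟨α, hα, rfl⟩

end SpecCorr
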